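/- Fix integers k ≥ 3 and 1 ≤ ℓ < k with (k−ℓ) not dividing k (equivalently for ℓ<k/2: any ℓ with 1≤ℓ<k/2). Let a = ⌈k/(k−ℓ)⌉·(k−ℓ) and let n be divisible by k−ℓ. Define the k-graph H₀ on vertex set V = A ∪ B where |A| = ⌈n/a⌉ − 1, and E(H₀) consists of all k-subsets of V intersecting A. Then H₀ contains no Hamilton ℓ-cycle, i.e., no spanning sub-hypergraph that is an ℓ-cycle on n vertices. -/

import Mathlib

/-- The edges of a `k`-uniform `ℓ`-cycle on `n` vertices. -/
def cycleEdges (n k l : ℕ) {V : Type*} [DecidableEq V] (f : ZMod n → V) :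
    Finset (Finset V) :=
  (Finset.range (n / (k - l))).image
    (fun i => (Finset.range k).image (fun j => f ((i * (k - l) + j : ℕ) : ZMod n)))

/-- A `k`-graph with edge set `E` on an `n`-vertex type `V` has a Hamilton `ℓ`-cycle if
there is a cyclic ordering of the vertices such that all edges of the corresponding
`ℓ`-cycle belong to `E`. -/
def HasHamiltonLCycle (n k l : ℕ) {V : Type*} [DecidableEq V]
    (E : Finset (Finset V)) : Prop :=
  ∃ f : ZMod n ≃ V, cycleEdges n k l (f : ZMod n → V) ⊆ E

/-- Among the numbers `t < k` with fixed residue mod `d` there are at most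
`⌈k/d⌉` many. -/
lemma card_residue_le (k d r : ℕ) (hd : 0 < d) :
    ((Finset.range k).filter (fun t => t % d = r)).card ≤ (k + d - 1) / d := by
  have h := Finset.card_range ((k + d - 1) / d)
  rw [← h]
  apply Finset.card_le_card_of_injOn (fun t => t / d)
  · intro t ht
    simp only [Finset.mem_coe, Finset.mem_filter, Finset.mem_range] at ht
    simp only [Finset.mem_coe, Finset.mem_range]
    have hk1 : 1 ≤ k := by
      rcases Nat.eq_zero_or_pos k with h | h
      · omega
      · exact h
    have h1 : t / d ≤ (k - 1) / d := Nat.div_le_div_right (by omega)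
    have h2 : (k - 1 + d) / d = (k - 1) / d + 1 := Nat.add_div_right _ hd
    have h3 : k + d - 1 = k - 1 + d := by omega
    rw [h3]
    omega
  · intro t ht t' ht' h
    simp only [Finset.coe_filter, Set.mem_setOf_eq, Finset.mem_range] at ht ht'
    have h1 := Nat.div_add_mod t d
    have h2 := Nat.div_add_mod t' d
    have h' : t / d = t' / d := h
    have : d * (t / d) = d * (t' / d) := by rw [h']
    omega

/-- The space barrier: for `1 ≤ ℓ < k/2`, `a = ⌈k/(k−ℓ)⌉·(k−ℓ)` and `k−ℓ ∣ n`, the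
`k`-graph on `n` vertices whose edges are all `k`-sets meeting a fixed set `A` of
`⌈n/a⌉ − 1` vertices has no Hamilton `ℓ`-cycle. -/
theorem extremal_construction_no_hamilton_cycle {V : Type*} [Fintype V] [DecidableEq V]
    (n k l : ℕ) (hk : 3 ≤ k) (hl : 1 ≤ l) (hlk : 2 * l < k)
    (hdvd : (k - l) ∣ n) (hV : Fintype.card V = n)
    (a : ℕ) (ha : a = ((k + (k - l) - 1) / (k - l)) * (k - l))
    (A : Finset V) (hA : A.card = (n + a - 1) / a - 1) :
    ¬ HasHamiltonLCycle n k l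
        ((Finset.univ.powersetCard k).filter (fun e => (e ∩ A).Nonempty)) := by
  rintro ⟨f, hsub⟩
  classical
  set d := k - l with hd_def
  have hd : 0 < d := by omega
  -- dispose of n = 0
  rcases Nat.eq_zero_or_pos n with h0 | hn
  · subst h0
    have : IsEmpty V := Fintype.card_eq_zero_iff.mp hV
    exact this.elim (f 0)
  haveI : NeZero n := ⟨hn.ne'⟩
  set m := n / d with hm_def
  have hmd : m * d = n := Nat.div_mul_cancel hdvd
  have hm1 : 1 ≤ m := by
    rcases Nat.eq_zero_or_pos m with h | h
    · rw [h] at hmd; omega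
    · exact h
  -- the edges of the cycle
  set e : ℕ → Finset V :=
    fun i => (Finset.range k).image (fun j => f ((i * d + j : ℕ) : ZMod n)) with he_def
  have hmemE : ∀ i ∈ Finset.range m, (e i).card = k ∧ ((e i) ∩ A).Nonempty := by
    intro i hi
    have hcyc : e i ∈ cycleEdges n k l f :=
      Finset.mem_image.mpr ⟨i, by simpa [← hd_def, ← hm_def] using hi, rfl⟩
    have := hsub hcyc
    simp only [Finset.mem_filter, Finset.mem_powersetCard] at this
    exact ⟨this.1.2, this.2⟩
  -- hence k ≤ n
  have hkn : k ≤ n := by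
    have h0 := hmemE 0 (Finset.mem_range.mpr hm1)
    have := Finset.card_le_univ (e 0)
    omega
  set c := (k + d - 1) / d with hc_def
  have hc1 : 1 ≤ c := by
    have : d ≤ k + d - 1 := by omega
    exact Nat.one_le_div_iff hd |>.mpr this
  -- choose a vertex of A in each edge
  have hV0 : Nonempty V := ⟨f 0⟩
  set g : ℕ → V := fun i =>
    if h : ((e i) ∩ A).Nonempty then h.choose else Classical.arbitrary V with hg_def
  have hg : ∀ i ∈ Finset.range m, g i ∈ e i ∧ g i ∈ A := by
    intro i hi
    have h := (hmemE i hi).2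
    have := h.choose_spec
    simp only [Finset.mem_inter] at this
    simp only [hg_def, dif_pos h]
    exact this
  -- key bound : each vertex lies in at most c edges
  have hdeg : ∀ v ∈ A, ((Finset.range m).filter (fun i => v ∈ e i)).card ≤ c := by
    intro v _
    set x : ZMod n := f.symm v with hx_def
    have hvx : f x = v := f.apply_symm_apply v
    -- witness function : the offset j
    have hwit : ∀ i ∈ (Finset.range m).filter (fun i => v ∈ e i),
        ∃ j < k, ((i * d + j : ℕ) : ZMod n) = x := by
      intro i hi
      simp only [Finset.mem_filter, Finset.mem_range, he_def, Finset.mem_image] at hi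
      obtain ⟨_, j, hj, hfj⟩ := hi
      refine ⟨j, hj, ?_⟩
      apply f.injective
      rw [hfj, hvx]
    calc ((Finset.range m).filter (fun i => v ∈ e i)).card
        ≤ ((Finset.range k).filter (fun t => t % d = x.val % d)).card := by
          apply Finset.card_le_card_of_injOn (fun i => (x - ((i * d : ℕ) : ZMod n)).val)
          · intro i hi
            obtain ⟨j, hjk, hj⟩ := hwit i hi
            have hjval : (x - ((i * d : ℕ) : ZMod n)) = (j : ZMod n) := by
              rw [← hj]; push_cast; ring
            have hjlt : j < n := lt_of_lt_of_le hjk hkn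
            have : (x - ((i * d : ℕ) : ZMod n)).val = j := by
              rw [hjval, ZMod.val_natCast, Nat.mod_eq_of_lt hjlt]
            simp only [Finset.mem_coe]; rw [this]
            simp only [Finset.mem_filter, Finset.mem_range]
            refine ⟨hjk, ?_⟩
            -- (i*d + j) % n = x.val, and d ∣ n
            have hxv : (i * d + j) % n = x.val := by
              have := ZMod.val_natCast (n := n) (i * d + j)
              rw [hj] at this
              omega
            have hdn : d ∣ n := hdvd
            calc j % d = (i * d + j) % d := by
                  rw [Nat.add_comm, Nat.add_mul_mod_self_right]
              _ = ((i * d + j) % n) % d := (Nat.mod_mod_of_dvd _ hdn).symm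
              _ = x.val % d := by rw [hxv]
          · intro i hi i' hi' hval
            simp only [Finset.coe_filter, Set.mem_setOf_eq, Finset.mem_range] at hi hi'
            have : x - ((i * d : ℕ) : ZMod n) = x - ((i' * d : ℕ) : ZMod n) :=
              ZMod.val_injective _ hval
            have hcast : ((i * d : ℕ) : ZMod n) = ((i' * d : ℕ) : ZMod n) :=
              sub_right_injective this
            have hmod : (i * d) % n = (i' * d) % n := by
              have h1 := ZMod.val_natCast (n := n) (i * d)
              have h2 := ZMod.val_natCast (n := n) (i' * d)
              rw [hcast] at h1
              omega
            have hi_lt : i * d < n := by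
              have := (Nat.mul_lt_mul_right hd).mpr hi.1
              omega
            have hi'_lt : i' * d < n := by
              have := (Nat.mul_lt_mul_right hd).mpr hi'.1
              omega
            rw [Nat.mod_eq_of_lt hi_lt, Nat.mod_eq_of_lt hi'_lt] at hmod
            exact Nat.eq_of_mul_eq_mul_right hd hmod
      _ ≤ c := card_residue_le k d _ hd
  -- double counting
  have hcount : m ≤ A.card * c := by
    have hfib := Finset.card_eq_sum_card_fiberwise
      (f := g) (s := Finset.range m) (t := A) (fun i hi => (hg i hi).2)
    have hsum : ∑ v ∈ A, ((Finset.range m).filter (fun i => g i = v)).card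
        ≤ ∑ v ∈ A, c := by
      apply Finset.sum_le_sum
      intro v hv
      calc ((Finset.range m).filter (fun i => g i = v)).card
          ≤ ((Finset.range m).filter (fun i => v ∈ e i)).card := by
            apply Finset.card_le_card
            intro i hi
            simp only [Finset.mem_filter] at hi ⊢
            exact ⟨hi.1, hi.2 ▸ (hg i hi.1).1⟩
        _ ≤ c := hdeg v hv
    calc m = (Finset.range m).card := (Finset.card_range m).symm
      _ = ∑ v ∈ A, ((Finset.range m).filter (fun i => g i = v)).card := hfib
      _ ≤ ∑ v ∈ A, c := hsum
      _ = A.card * c := by rw [Finset.sum_const, smul_eq_mul]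
  -- final arithmetic contradiction
  have hac : a = c * d := by rw [ha, hc_def, hd_def]
  set q := (n + a - 1) / a with hq_def
  have hq1 : q * a ≤ n + a - 1 := Nat.div_mul_le_self _ _
  have hAcard : A.card = q - 1 := hA
  have ha_pos : 0 < a := by rw [hac]; positivity
  -- (q-1) * a ≤ n - 1
  have hq2 : (q - 1) * a ≤ n - 1 := by
    rcases Nat.eq_zero_or_pos q with h | h
    · rw [h]; simp
    · have hq3 : q - 1 + 1 = q := by omega
      have : (q - 1) * a + a = q * a := by
        calc (q - 1) * a + a = (q - 1 + 1) * a := by ring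
          _ = q * a := by rw [hq3]
      omega
  -- hence A.card * c * d ≤ n - 1 < m * d, so A.card * c < m
  have hfin : A.card * c < m := by
    have h1 : A.card * c * d = (q - 1) * a := by
      rw [hAcard, hac]; ring
    have h2 : A.card * c * d < m * d := by
      rw [h1, hmd]; omega
    exact Nat.lt_of_mul_lt_mul_right h2
  omega
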